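/- For every odd prime p, if K(p) ≢ 0 (mod p) and p | K(n) implies n < p, then there exist infinitely many primes q such that q | K(n) for some n > 3 (i.e., there are infinitely many Kurepa primes). -/

import Mathlib

/-- Kurepa's left factorial. -/
def K (n : ℕ) : ℕ := ∑ k ∈ Finset.range n, k.factorial

lemma K_succ (n : ℕ) : K (n + 1) = K n + n.factorial := Finset.sum_range_succ _ _

lemma K_mod4 (n : ℕ) (hn : 4 ≤ n) : K n % 4 = 2 ∧ 10 ≤ K n := by
  induction n, hn using Nat.le_induction with
  | base => constructor <;> norm_num [K, Finset.sum_range_succ, Nat.factorial]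
  | succ n hn ih =>
    obtain ⟨hm, hb⟩ := ih
    have h4 : 4 ∣ n.factorial := Nat.dvd_factorial (by norm_num) hn
    obtain ⟨c, hc⟩ := h4
    constructor <;> (rw [K_succ]; omega)

lemma exists_odd_prime_dvd (n : ℕ) (hn : 4 ≤ n) :
    ∃ q, q.Prime ∧ Odd q ∧ q ∣ K n := by
  obtain ⟨hm, hb⟩ := K_mod4 n hn
  set d := K n / 2 with hd
  have h2 : K n = 2 * d := by omega
  have hdodd : d % 2 = 1 := by omega
  have hd1 : 1 < d := by omega
  have hp := Nat.minFac_prime (by omega : d ≠ 1)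
  have hdvd := Nat.minFac_dvd d
  refine ⟨d.minFac, hp, ?_, dvd_trans hdvd ⟨2, by omega⟩⟩
  rcases hp.eq_two_or_odd' with h2' | hodd
  · exfalso; rw [h2'] at hdvd; omega
  · exact hodd

theorem infinitely_many_kurepa_primes
    (h : ∀ p : ℕ, p.Prime → Odd p → ¬ p ∣ K p ∧ ∀ n, p ∣ K n → n < p) :
    {q : ℕ | q.Prime ∧ ∃ n, 3 < n ∧ q ∣ K n}.Infinite := by
  by_contra hfin
  rw [Set.not_infinite] at hfin
  obtain ⟨m, hm⟩ := hfin.bddAbove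
  obtain ⟨q, hq, hqodd, hqdvd⟩ := exists_odd_prime_dvd (m + 4) (by omega)
  have hqm : q ≤ m := hm ⟨hq, m + 4, by omega, hqdvd⟩
  have hlt := (h q hq hqodd).2 (m + 4) hqdvd
  omega
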